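/- The sum over all natural numbers d ≥ 1 of μ(d)/(d·φ(2d)) equals (3/4)·∏_{p odd prime} (1 - 1/(p(p-1))). -/

import Mathlib

open ArithmeticFunction Nat

noncomputable def F8 (d : ℕ) : ℝ := (ArithmeticFunction.moebius d : ℝ) / (d * (2 * d).totient)

noncomputable def F8' (d : ℕ) : ℝ := if Even d then 0 else F8 d

lemma totient_two_mul_odd {d : ℕ} (hd : Odd d) : (2 * d).totient = d.totient := by
  rw [Nat.totient_mul (by simpa [Nat.coprime_two_left] using hd), Nat.totient_two, one_mul]

lemma totient_two_mul_even {d : ℕ} (hd : Even d) : (2 * d).totient = 2 * d.totient :=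
  Nat.totient_mul_of_prime_of_dvd Nat.prime_two hd.two_dvd

lemma totient_sq_bound : ∀ n : ℕ, n ≤ 2 * n.totient ^ 2 ∧ (Odd n → n ≤ n.totient ^ 2) := by
  intro n
  induction n using Nat.recOnPosPrimePosCoprime with
  | prime_pow p k hp hk =>
      have hp' : p.Prime := hp
      have hk' : k - 1 + 1 = k := by omega
      rw [Nat.totient_prime_pow hp' hk]
      rcases eq_or_ne p 2 with rfl | hodd
      · constructor
        · have h2 : 2 ^ k = 2 * 2 ^ (k - 1) := by
            conv_lhs => rw [← hk']
            rw [pow_succ]; ring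
          calc 2 ^ k ≤ 2 ^ k * 2 ^ (k - 1) := Nat.le_mul_of_pos_right _ (by positivity)
            _ = 2 * (2 ^ (k-1) * (2-1)) ^ 2 := by rw [h2]; ring
        · intro h
          exfalso
          have : ¬ Odd (2 ^ k) := by simp [Nat.even_pow, hk.ne']
          exact this h
      · have hp3 : 3 ≤ p := (Nat.Prime.two_le hp').lt_of_ne (Ne.symm hodd)
        have key : p ^ k ≤ (p ^ (k - 1) * (p - 1)) ^ 2 := by
          obtain ⟨q, rfl⟩ : ∃ q, p = q + 1 := ⟨p - 1, by omega⟩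
          have hq : 2 ≤ q := by omega
          have h1 : q + 1 ≤ (q + 1 - 1) ^ 2 := by simp; nlinarith
          have h2 : (q+1) ^ (k-1) ≤ ((q+1) ^ (k-1)) ^ 2 :=
            Nat.le_self_pow (by norm_num) _
          calc (q+1) ^ k = (q+1) ^ (k-1) * (q+1) := by rw [← pow_succ, hk']
            _ ≤ ((q+1) ^ (k-1)) ^ 2 * (q+1-1) ^ 2 := Nat.mul_le_mul h2 h1
            _ = ((q+1) ^ (k-1) * (q+1-1)) ^ 2 := by rw [mul_pow]
        exact ⟨key.trans (Nat.le_mul_of_pos_left _ (by norm_num)), fun _ => key⟩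
  | zero => simp
  | one => simp
  | coprime a b ha hb hab iha ihb =>
      have hmul : (a * b).totient = a.totient * b.totient := Nat.totient_mul hab
      constructor
      · rcases Nat.even_or_odd a with hae | hao
        · have hbo : Odd b := by
            rcases Nat.even_or_odd b with hbe | hbo
            · exfalso
              have h2 : (2:ℕ) ∣ 1 := hab ▸ Nat.dvd_gcd hae.two_dvd hbe.two_dvd
              norm_num at h2
            · exact hbo
          calc a * b ≤ (2 * a.totient ^ 2) * (b.totient ^ 2) :=
               Nat.mul_le_mul iha.1 (ihb.2 hbo)
            _ = 2 * (a * b).totient ^ 2 := by rw [hmul]; ring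
        · calc a * b ≤ (a.totient ^ 2) * (2 * b.totient ^ 2) :=
               Nat.mul_le_mul (iha.2 hao) ihb.1
            _ = 2 * (a * b).totient ^ 2 := by rw [hmul]; ring
      · intro hodd
        have hao : Odd a := (Nat.odd_mul.mp hodd).1
        have hbo : Odd b := (Nat.odd_mul.mp hodd).2
        calc a * b ≤ (a.totient ^ 2) * (b.totient ^ 2) := Nat.mul_le_mul (iha.2 hao) (ihb.2 hbo)
          _ = (a * b).totient ^ 2 := by rw [hmul]; ring

lemma sqrt_le_totient_two_mul (d : ℕ) : Real.sqrt d ≤ ((2 * d).totient : ℝ) := by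
  have h : d ≤ (2 * d).totient ^ 2 := by
    rcases Nat.even_or_odd d with he | ho
    · rw [totient_two_mul_even he]
      nlinarith [(totient_sq_bound d).1]
    · rw [totient_two_mul_odd ho]
      exact (totient_sq_bound d).2 ho
  have h' : (d : ℝ) ≤ ((2*d).totient : ℝ) ^ 2 := by exact_mod_cast h
  calc Real.sqrt d ≤ Real.sqrt (((2*d).totient : ℝ) ^ 2) := Real.sqrt_le_sqrt h'
    _ = ((2*d).totient : ℝ) := by rw [Real.sqrt_sq (by positivity)]

lemma F8_summable : Summable (fun d => ‖F8 d‖) := by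
  have hsum : Summable (fun d : ℕ => 1 / (d : ℝ) ^ (3/2 : ℝ)) :=
    Real.summable_one_div_nat_rpow.mpr (by norm_num)
  apply Summable.of_nonneg_of_le (fun d => norm_nonneg _) _ hsum
  intro d
  rcases Nat.eq_zero_or_pos d with rfl | hd
  · simp [F8]
  have hd1 : (1:ℝ) ≤ d := by exact_mod_cast hd
  have hsqrt : Real.sqrt d ≤ ((2*d).totient : ℝ) := sqrt_le_totient_two_mul d
  have hsqrtpos : 0 < Real.sqrt d := Real.sqrt_pos.mpr (by positivity)
  have hrpow : (d : ℝ) ^ (3/2 : ℝ) = d * Real.sqrt d := by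
    rw [Real.sqrt_eq_rpow, ← Real.rpow_one_add' (by positivity) (by norm_num)]
    norm_num
  have hnum : ‖(ArithmeticFunction.moebius d : ℝ)‖ ≤ 1 := by
    rw [Real.norm_eq_abs, ← Int.cast_abs]
    exact_mod_cast ArithmeticFunction.abs_moebius_le_one
  have hden : (d : ℝ) * Real.sqrt d ≤ (d : ℝ) * ((2*d).totient : ℝ) :=
    mul_le_mul_of_nonneg_left hsqrt (by positivity)
  have hdenpos : (0:ℝ) < d * Real.sqrt d := by positivity
  calc ‖F8 d‖ = ‖(ArithmeticFunction.moebius d : ℝ)‖ / ((d : ℝ) * ((2*d).totient : ℝ)) := by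
        rw [F8, norm_div]
        congr 1
        rw [Real.norm_eq_abs, abs_of_nonneg (by positivity)]
    _ ≤ 1 / ((d:ℝ) * Real.sqrt d) := div_le_div₀ zero_le_one hnum hdenpos hden
    _ = 1 / (d : ℝ) ^ (3/2:ℝ) := by rw [hrpow]

lemma F8_zero : F8 0 = 0 := by simp [F8]

lemma F8_one : F8 1 = 1 := by
  norm_num [F8, Nat.totient_two]

lemma totient_two_mul_mul {m n : ℕ} (h : Nat.Coprime m n) :
    (2 * (m * n)).totient = (2 * m).totient * (2 * n).totient := by
  rcases Nat.even_or_odd n with he | ho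
  · have hmo : Odd m := by
      rcases Nat.even_or_odd m with hme | hmo
      · exfalso
        have h2 : (2:ℕ) ∣ 1 := h ▸ Nat.dvd_gcd hme.two_dvd he.two_dvd
        norm_num at h2
      · exact hmo
    have hc : Nat.Coprime m (2 * n) :=
      Nat.Coprime.mul_right (Nat.coprime_two_right.mpr hmo) h
    rw [show 2 * (m * n) = m * (2 * n) by ring, Nat.totient_mul hc,
      totient_two_mul_odd hmo]
  · have hc : Nat.Coprime (2 * m) n :=
      Nat.Coprime.mul (Nat.coprime_two_left.mpr ho) h
    rw [show 2 * (m * n) = (2 * m) * n by ring, Nat.totient_mul hc,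
      totient_two_mul_odd ho]

lemma F8_mul {m n : ℕ} (h : Nat.Coprime m n) : F8 (m * n) = F8 m * F8 n := by
  rcases Nat.eq_zero_or_pos m with rfl | hm
  · have hn : n = 1 := Nat.coprime_zero_left n |>.mp h
    subst hn; simp [F8_zero, F8_one]
  rcases Nat.eq_zero_or_pos n with rfl | hn
  · have hm1 : m = 1 := Nat.coprime_zero_right m |>.mp h
    subst hm1; simp [F8_zero, F8_one]
  have hμ : ArithmeticFunction.moebius (m * n)
      = ArithmeticFunction.moebius m * ArithmeticFunction.moebius n :=
    ArithmeticFunction.isMultiplicative_moebius.map_mul_of_coprime h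
  have hφ := totient_two_mul_mul h
  simp only [F8]
  rw [hμ, hφ]
  push_cast
  ring

lemma F8'_zero : F8' 0 = 0 := by simp [F8']

lemma F8'_one : F8' 1 = 1 := by
  rw [F8', if_neg (by decide), F8_one]

lemma F8'_mul {m n : ℕ} (h : Nat.Coprime m n) : F8' (m * n) = F8' m * F8' n := by
  simp only [F8']
  rcases Nat.even_or_odd m with hme | hmo
  · rw [if_pos hme, if_pos (hme.mul_right n), zero_mul]
  rcases Nat.even_or_odd n with hne | hno
  · rw [if_pos hne, if_pos (hne.mul_left m), mul_zero]
  rw [if_neg (Nat.not_even_iff_odd.mpr (Nat.odd_mul.mpr ⟨hmo, hno⟩)),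
    if_neg (Nat.not_even_iff_odd.mpr hmo), if_neg (Nat.not_even_iff_odd.mpr hno), F8_mul h]

lemma F8'_summable : Summable (fun d => ‖F8' d‖) := by
  apply Summable.of_nonneg_of_le (fun d => norm_nonneg _) _ F8_summable
  intro d
  rw [F8']
  split
  · simp
  · exact le_rfl

lemma F8_pow_eq_zero {p e : ℕ} (hp : p.Prime) (he : 2 ≤ e) : F8 (p ^ e) = 0 := by
  have hμ : ArithmeticFunction.moebius (p ^ e) = 0 := by
    rw [ArithmeticFunction.moebius_apply_prime_pow hp (by omega)]
    simp [show e ≠ 1 by omega]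
  rw [F8, hμ, Int.cast_zero, zero_div]

lemma tsum_F8_pow {p : ℕ} (hp : p.Prime) : ∑' e, F8 (p ^ e) = 1 + F8 p := by
  rw [tsum_eq_sum (s := {0, 1}) (by
    intro e he
    simp only [Finset.mem_insert, Finset.mem_singleton] at he
    exact F8_pow_eq_zero hp (by omega))]
  rw [Finset.sum_pair (by norm_num)]
  rw [pow_zero, pow_one, F8_one]

lemma tsum_F8'_pow {p : ℕ} (hp : p.Prime) :
    ∑' e, F8' (p ^ e) = if p = 2 then 1 else 1 + F8 p := by
  split_ifs with h2
  · subst h2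
    rw [tsum_eq_sum (s := {0}) (by
      intro e he
      simp only [Finset.mem_singleton] at he
      rw [F8', if_pos (by simp [Nat.even_pow, he])])]
    simp [F8'_one]
  · have hodd : Odd p := hp.odd_of_ne_two h2
    have : ∀ e, F8' (p ^ e) = F8 (p ^ e) := by
      intro e
      rw [F8', if_neg (by simpa using hodd.pow)]
    rw [tsum_congr this, tsum_F8_pow hp]

lemma F8_two : F8 2 = -(1/4) := by
  have h4 : (2 * 2).totient = 2 := by
    rw [totient_two_mul_even (by decide), Nat.totient_two]
  rw [F8, h4, ArithmeticFunction.moebius_apply_prime Nat.prime_two]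
  norm_num

lemma F8_odd_prime {p : ℕ} (hp : p.Prime) (ho : Odd p) :
    (1 : ℝ) + F8 p = 1 - 1 / ((p : ℝ) * ((p : ℝ) - 1)) := by
  have hφ : (2 * p).totient = p - 1 := by
    rw [totient_two_mul_odd ho, Nat.totient_prime hp]
  rw [F8, hφ, ArithmeticFunction.moebius_apply_prime hp]
  have hcast : ((p - 1 : ℕ) : ℝ) = (p : ℝ) - 1 := by
    have := hp.one_le
    push_cast [Nat.cast_sub this]
    ring
  rw [hcast]
  push_cast
  ring

/-- `∑_{d ≥ 1} μ(d)/(d φ(2d)) = (3/4) ∏_{p odd prime} (1 - 1/(p(p-1)))`. -/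
theorem stmt_8 :
    (∑' d : ℕ, (ArithmeticFunction.moebius d : ℝ) / (d * (2 * d).totient))
      = (3 / 4) *
        ∏' p : {p : ℕ // p.Prime ∧ Odd p}, (1 - 1 / (((p : ℕ) : ℝ) * (((p : ℕ) : ℝ) - 1))) := by
  classical
  have hasF : HasProd (fun p : Nat.Primes => ∑' e, F8 ((p : ℕ) ^ e)) (∑' n, F8 n) :=
    EulerProduct.eulerProduct_hasProd F8_one (fun {m n} h => F8_mul h) F8_summable F8_zero
  have hasF' : HasProd (fun p : Nat.Primes => ∑' e, F8' ((p : ℕ) ^ e)) (∑' n, F8' n) :=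
    EulerProduct.eulerProduct_hasProd F8'_one (fun {m n} h => F8'_mul h) F8'_summable F8'_zero
  set two : Nat.Primes := ⟨2, Nat.prime_two⟩ with htwo
  set G : Nat.Primes → ℝ := fun p => ∑' e, F8 ((p : ℕ) ^ e) with hG
  have hupd : Function.update G two 1 = fun p : Nat.Primes => ∑' e, F8' ((p : ℕ) ^ e) := by
    funext p
    by_cases hp2 : p = two
    · subst hp2
      rw [Function.update_self]
      show (1 : ℝ) = ∑' e, F8' (2 ^ e)
      rw [tsum_F8'_pow Nat.prime_two, if_pos rfl]
    · have hp2' : (p : ℕ) ≠ 2 := fun h => hp2 (Subtype.ext h)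
      rw [Function.update_of_ne hp2]
      show (∑' e, F8 ((p : ℕ) ^ e)) = ∑' e, F8' ((p : ℕ) ^ e)
      rw [tsum_F8_pow p.2, tsum_F8'_pow p.2, if_neg hp2']
  have hmult : Multipliable (Function.update G two 1) := by
    rw [hupd]; exact hasF'.multipliable
  have hsplit : ∏' p : Nat.Primes, G p = G two * ∏' p : Nat.Primes, ite (p = two) 1 (G p) :=
    Multipliable.tprod_eq_mul_tprod_ite' two hmult
  have hGtwo : G two = 3 / 4 := by
    rw [hG]
    show (∑' e, F8 (2 ^ e)) = 3/4
    rw [tsum_F8_pow Nat.prime_two, F8_two]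
    norm_num
  -- identify the remaining product with the product over odd primes
  set g : {p : ℕ // p.Prime ∧ Odd p} → Nat.Primes := fun q => ⟨q.1, q.2.1⟩ with hg
  have hginj : Function.Injective g := by
    intro a b hab
    have : (a : ℕ) = (b : ℕ) := congrArg (Subtype.val : Nat.Primes → ℕ) hab
    exact Subtype.ext this
  have hrange : Function.mulSupport (fun p : Nat.Primes => ite (p = two) 1 (G p))
      ⊆ Set.range g := by
    intro p hp
    have hp2 : p ≠ two := by
      intro h
      apply hp
      subst h
      simp
    have hodd : Odd (p : ℕ) := p.2.odd_of_ne_two (fun h => hp2 (Subtype.ext h))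
    exact ⟨⟨(p : ℕ), p.2, hodd⟩, rfl⟩
  have hodd_prod : ∏' p : Nat.Primes, ite (p = two) 1 (G p)
      = ∏' q : {p : ℕ // p.Prime ∧ Odd p},
          (1 - 1 / (((q : ℕ) : ℝ) * (((q : ℕ) : ℝ) - 1))) := by
    rw [← hginj.tprod_eq hrange]
    apply tprod_congr
    intro q
    have hq2 : g q ≠ two := by
      intro h
      have hval : (q : ℕ) = 2 := congrArg (Subtype.val : Nat.Primes → ℕ) h
      have hodd := q.2.2
      rw [hval] at hodd
      exact (by decide : ¬ Odd 2) hodd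
    show (if g q = two then (1:ℝ) else G (g q)) = _
    rw [if_neg hq2]
    show (∑' e, F8 ((q : ℕ) ^ e)) = _
    rw [tsum_F8_pow q.2.1, F8_odd_prime q.2.1 q.2.2]
  calc (∑' d : ℕ, (ArithmeticFunction.moebius d : ℝ) / (d * (2 * d).totient))
      = ∑' n, F8 n := by rfl
    _ = ∏' p : Nat.Primes, G p := hasF.tprod_eq.symm
    _ = G two * ∏' p : Nat.Primes, ite (p = two) 1 (G p) := hsplit
    _ = (3 / 4) * ∏' p : {p : ℕ // p.Prime ∧ Odd p},
          (1 - 1 / (((p : ℕ) : ℝ) * (((p : ℕ) : ℝ) - 1))) := by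
        rw [hGtwo, hodd_prod]
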